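/- For all n ≥ 6, the inequality 1/((1 - 2^{-(n-1)})^n ζ(n-1)^n) > 1 - n/(2^n - 1) holds, where ζ is the Riemann zeta function. -/

import Mathlib

lemma keyR (t : ℕ) : (2:ℝ)^(t+6) * (1/3^(t+5) + 1/(2*4^(t+3))) < 1 := by
  induction t with
  | zero => norm_num
  | succ t ih =>
    have p2 : (0:ℝ) < 2^(t+6) := by positivity
    have p3 : (0:ℝ) < 3^(t+5) := by positivity
    have p4 : (0:ℝ) < 4^(t+3) := by positivity
    have e2 : (2:ℝ)^(t+1+6) = 2^(t+6)*2 := by ring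
    have e3 : (3:ℝ)^(t+1+5) = 3^(t+5)*3 := by ring
    have e4 : (4:ℝ)^(t+1+3) = 4^(t+3)*4 := by ring
    rw [e2, e3, e4]
    rw [div_add_div _ _ (by positivity) (by positivity), ← mul_div_assoc,
      div_lt_one (by positivity)] at ih ⊢
    nlinarith [mul_pos p3 p4, mul_pos p2 p3, mul_pos p2 p4]

lemma tailV : ∑' k : ℕ, (1:ℝ) / ((k:ℝ)+4)^2 ≤ 1/2 := by
  have hsum2 : Summable (fun k : ℕ => (1:ℝ) / ((k:ℝ)+4)^2) := by
    have := (summable_nat_add_iff (f := fun k : ℕ => (1:ℝ) / (k:ℝ)^2) 4).mpr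
      (Real.summable_one_div_nat_pow.mpr one_lt_two)
    exact this.congr (by intro k; push_cast; ring_nf)
  refine Summable.tsum_le_of_sum_le hsum2 (fun A => ?_)
  obtain ⟨N, hA⟩ := A.exists_nat_subset_range
  calc ∑ k ∈ A, (1:ℝ) / ((k:ℝ)+4)^2
      ≤ ∑ k ∈ Finset.range N, (1:ℝ) / ((k:ℝ)+4)^2 :=
        Finset.sum_le_sum_of_subset_of_nonneg hA (fun i _ _ => by positivity)
    _ = ∑ i ∈ Finset.Ioo 3 (4+N), ((i:ℝ)^2)⁻¹ := by
        rw [← Finset.Ico_add_one_left_eq_Ioo, Finset.sum_Ico_eq_sum_range]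
        simp only [Nat.reduceAdd, Nat.add_sub_cancel_left]
        refine Finset.sum_congr rfl (fun i _ => ?_)
        push_cast; rw [one_div]; ring_nf
    _ ≤ 2 / (3+1) := sum_Ioo_inv_sq_le 3 (4+N)
    _ = 1/2 := by norm_num

set_option maxHeartbeats 2000000 in
theorem density_gap_inequality (n : ℕ) (hn : 6 ≤ n) :
    1 - (n : ℝ) / (2 ^ n - 1) <
      1 / ((1 - 1 / (2 : ℝ) ^ (n - 1)) ^ n *
        (∑' k : ℕ, (1 : ℝ) / ((k : ℝ) + 1) ^ (n - 1)) ^ n) := by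
  obtain ⟨t, rfl⟩ : ∃ t, n = t + 6 := ⟨n - 6, by omega⟩
  have hpred : t + 6 - 1 = t + 5 := by omega
  rw [hpred]
  set S : ℝ := ∑' k : ℕ, (1:ℝ) / ((k:ℝ)+1)^(t+5) with hSdef
  set a : ℝ := 1 / (2:ℝ)^(t+5) with hadef
  set ε : ℝ := 1/(3:ℝ)^(t+5) + 1/(2*4^(t+3)) with hεdef
  have hsum : Summable (fun k : ℕ => (1:ℝ) / ((k:ℝ)+1)^(t+5)) := by
    have := (summable_nat_add_iff (f := fun k : ℕ => (1:ℝ) / (k:ℝ)^(t+5)) 1).mpr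
      (Real.summable_one_div_nat_pow.mpr (by omega))
    exact this.congr (by intro k; push_cast; ring_nf)
  have hsum2 : Summable (fun k : ℕ => (1:ℝ) / ((k:ℝ)+4)^2) := by
    have := (summable_nat_add_iff (f := fun k : ℕ => (1:ℝ) / (k:ℝ)^2) 4).mpr
      (Real.summable_one_div_nat_pow.mpr one_lt_two)
    exact this.congr (by intro k; push_cast; ring_nf)
  have hsum5 : Summable (fun k : ℕ => (1:ℝ) / ((k:ℝ)+4)^(t+5)) := by
    have := (summable_nat_add_iff (f := fun k : ℕ => (1:ℝ) / (k:ℝ)^(t+5)) 4).mpr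
      (Real.summable_one_div_nat_pow.mpr (by omega))
    exact this.congr (by intro k; push_cast; ring_nf)
  -- tail bound
  have hU : (∑' k : ℕ, (1:ℝ) / ((k:ℝ)+4)^(t+5)) ≤ 1/(2*4^(t+3)) := by
    have hterm : ∀ k : ℕ, (1:ℝ) / ((k:ℝ)+4)^(t+5) ≤ (1/(4:ℝ)^(t+3)) * (1 / ((k:ℝ)+4)^2) := by
      intro k
      have h4 : (4:ℝ) ≤ (k:ℝ)+4 := by
        have : (0:ℝ) ≤ (k:ℝ) := Nat.cast_nonneg k
        linarith
      have hps : ((k:ℝ)+4)^(t+5) = ((k:ℝ)+4)^(t+3) * ((k:ℝ)+4)^2 := by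
        rw [← pow_add]
      have hd : (4:ℝ)^(t+3) * ((k:ℝ)+4)^2 ≤ ((k:ℝ)+4)^(t+5) := by
        rw [hps]
        gcongr
      rw [one_div, one_div, one_div, ← mul_inv]
      exact inv_anti₀ (by positivity) hd
    calc (∑' k : ℕ, (1:ℝ) / ((k:ℝ)+4)^(t+5))
        ≤ ∑' k : ℕ, (1/(4:ℝ)^(t+3)) * (1 / ((k:ℝ)+4)^2) :=
          Summable.tsum_le_tsum hterm hsum5 (hsum2.mul_left _)
      _ = (1/(4:ℝ)^(t+3)) * ∑' k : ℕ, (1:ℝ) / ((k:ℝ)+4)^2 := tsum_mul_left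
      _ ≤ (1/(4:ℝ)^(t+3)) * (1/2) :=
          mul_le_mul_of_nonneg_left tailV (by positivity)
      _ = 1/(2*4^(t+3)) := by ring
  -- split S
  have hsplit : S = 1 + a + 1/(3:ℝ)^(t+5) + ∑' k : ℕ, (1:ℝ) / ((k:ℝ)+4)^(t+5) := by
    rw [hSdef, ← Summable.sum_add_tsum_nat_add 3 hsum]
    have h1 : (∑' k : ℕ, (1:ℝ) / (((k+3:ℕ):ℝ)+1)^(t+5)) = ∑' k : ℕ, (1:ℝ) / ((k:ℝ)+4)^(t+5) := by
      refine tsum_congr (fun k => ?_); push_cast; ring_nf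
    rw [h1, hadef]
    rw [Finset.sum_range_succ, Finset.sum_range_succ, Finset.sum_range_one]
    norm_num
  have hSle : S ≤ 1 + a + ε := by
    rw [hεdef]; linarith [hsplit, hU]
  have hS1 : (1:ℝ) ≤ S := by
    have h := Summable.le_tsum hsum 0 (fun j _ => by positivity)
    rw [hSdef]
    simpa using h
  have ha0 : 0 < a := by rw [hadef]; positivity
  have h2s : (2:ℝ) ≤ 2^(t+5) := by
    calc (2:ℝ) = 2^1 := (pow_one 2).symm
    _ ≤ 2^(t+5) := pow_le_pow_right₀ (by norm_num) (by omega)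
  have ha1 : a ≤ 1/2 := by
    rw [hadef, div_le_div_iff₀ (by positivity) (by norm_num)]
    linarith
  clear_value S a ε
  have hε0 : 0 < ε := by rw [hεdef]; positivity
  have hεsmall : (2:ℝ)^(t+6) * ε < 1 := by
    rw [hεdef]; exact keyR t
  have h2big : (64:ℝ) ≤ 2^(t+6) := by
    calc (64:ℝ) = 2^6 := by norm_num
    _ ≤ 2^(t+6) := pow_le_pow_right₀ (by norm_num) (by omega)
  have hnsmall : ((t:ℝ)+6) < 2^(t+6) - 1 := by
    have h2t : (t:ℝ) < 2^t := by exact_mod_cast (Nat.lt_two_pow_self (n := t))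
    have he : (2:ℝ)^(t+6) = 64 * 2^t := by ring
    have h1t : (1:ℝ) ≤ 2^t := one_le_pow₀ (by norm_num)
    nlinarith
  have hP : (0:ℝ) < 2^(t+6) - 1 := by linarith
  have hδ1 : ((t:ℝ)+6) / (2^(t+6) - 1) < 1 := by
    rw [div_lt_one hP]; linarith
  have hδ0 : 0 < ((t:ℝ)+6) / (2^(t+6) - 1) := by positivity
  have hnε : ((t:ℝ)+6) * ε < ((t:ℝ)+6) / (2^(t+6) - 1) := by
    rw [lt_div_iff₀ hP]
    have hε21 : ε * (2^(t+6) - 1) < 1 := by nlinarith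
    nlinarith [mul_pos hε0 hP]
  have hε1 : ε < 1 := by nlinarith
  have hbern : 1 - ((t:ℝ)+6) * ε ≤ (1 - ε)^(t+6) := by
    have h := one_add_mul_le_pow (a := -ε) (by linarith) (t+6)
    push_cast at h
    calc 1 - ((t:ℝ)+6)*ε = 1 + ((t:ℝ)+6)*(-ε) := by ring
    _ ≤ (1 + -ε)^(t+6) := h
    _ = (1 - ε)^(t+6) := by ring_nf
  set B : ℝ := (1 - a) * S with hBdef
  clear_value B
  have hB0 : 0 < B := by
    rw [hBdef]
    have h1 : 0 < 1 - a := by linarith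
    exact mul_pos h1 (lt_of_lt_of_le one_pos hS1)
  have hBle : B ≤ 1 + ε := by
    rw [hBdef]
    calc (1-a)*S ≤ (1-a)*(1+a+ε) :=
          mul_le_mul_of_nonneg_left hSle (by linarith)
    _ ≤ 1 + ε := by nlinarith
  have hmain : B^(t+6) * (1 - ((t:ℝ)+6) / (2^(t+6) - 1)) < 1 := by
    have h1 : B^(t+6) * (1 - ((t:ℝ)+6) / (2^(t+6) - 1))
        < B^(t+6) * (1 - ((t:ℝ)+6)*ε) := by
      have hp := pow_pos hB0 (t+6)
      apply mul_lt_mul_of_pos_left _ hp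
      linarith
    have h2 : B^(t+6) * (1 - ((t:ℝ)+6)*ε) ≤ (1+ε)^(t+6) * (1-ε)^(t+6) := by
      apply mul_le_mul (pow_le_pow_left₀ hB0.le hBle _) hbern _ (by positivity)
      linarith
    have h3 : (1+ε)^(t+6) * (1-ε)^(t+6) ≤ 1 := by
      rw [← mul_pow]
      apply pow_le_one₀ (by nlinarith) (by nlinarith)
    linarith
  have hfinal : (1 - a)^(t+6) * S^(t+6) = B^(t+6) := by
    rw [hBdef, mul_pow]
  rw [hfinal, lt_div_iff₀ (pow_pos hB0 _)]
  push_cast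
  linarith
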